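/- Let {L₀, L₁} be a Δ-coherent pair of the second kind. Then there exist polynomials Λ₂, Λ₃ ∈ ℂ[x] with deg Λ₂ = 2 and deg Λ₃ ≤ 3, whose coefficients λ₂^{(2)} (the coefficient of x² in Λ₂) and λ₃^{(3)} (the coefficient of x³ in Λ₃) satisfy λ₂^{(2)} + (n−1)λ₃^{(3)} ≠ 0 for every n ≥ 1, such that Δ*L₁ = Λ₂L₀ and L₁ = Λ₃L₀; that is, L₁[Δp] = −L₀[Λ₂·p] and L₁[p] = L₀[Λ₃·p] for every p ∈ ℂ[x]. -/

import Mathlib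

open Polynomial

/-- The forward difference of a polynomial: `(Δp)(x) = p(x+1) − p(x)`. -/
noncomputable def polyDelta (p : Polynomial ℂ) : Polynomial ℂ :=
  p.comp (X + C 1) - p

namespace CoherentAux

open Finset

/-- `polyDelta` as a linear map. -/
noncomputable def deltaLM : Polynomial ℂ →ₗ[ℂ] Polynomial ℂ where
  toFun := polyDelta
  map_add' p q := by simp only [polyDelta, add_comp]; ring
  map_smul' c p := by simp only [polyDelta, smul_comp, smul_sub, RingHom.id_apply]

@[simp] lemma deltaLM_apply (p : Polynomial ℂ) : deltaLM p = polyDelta p := rfl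

lemma polyDelta_mul (a b : Polynomial ℂ) :
    polyDelta (a * b) = polyDelta a * b + (polyDelta a * polyDelta b + a * polyDelta b) := by
  simp only [polyDelta, mul_comp]; ring

/-- coefficients of `p.comp (X + C a)`. -/
lemma coeff_comp_X_add_C (p : Polynomial ℂ) (a : ℂ) {N : ℕ} (hN : p.natDegree < N) (k : ℕ) :
    (p.comp (X + C a)).coeff k
      = ∑ j ∈ Finset.range N, p.coeff j * (a ^ (j - k) * (j.choose k : ℂ)) := by
  rw [comp, eval₂_eq_sum_range' C hN, finset_sum_coeff]
  refine Finset.sum_congr rfl fun j _ => ?_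
  rw [coeff_C_mul, coeff_X_add_C_pow]

lemma coeff_comp_high (p : Polynomial ℂ) (a : ℂ) {m k : ℕ} (hp : p.natDegree ≤ m)
    (hk : m ≤ k) : (p.comp (X + C a)).coeff k = p.coeff k := by
  rw [coeff_comp_X_add_C p a (Nat.lt_succ_of_le hp) k, Finset.sum_eq_single k]
  · simp
  · intro j hj hjk
    have hjm : j ≤ m := Nat.lt_succ_iff.mp (Finset.mem_range.mp hj)
    have : j < k := lt_of_le_of_ne (hjm.trans hk) hjk
    rw [Nat.choose_eq_zero_of_lt this]
    simp
  · intro hk'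
    have : m < k := lt_of_not_ge fun h => hk' (Finset.mem_range.mpr (Nat.lt_succ_of_le h))
    rw [coeff_eq_zero_of_natDegree_lt (lt_of_le_of_lt hp this)]
    simp

lemma coeff_comp_pred (p : Polynomial ℂ) (a : ℂ) {d : ℕ} (hp : p.natDegree ≤ d + 1) :
    (p.comp (X + C a)).coeff d = p.coeff d + a * ((d : ℂ) + 1) * p.coeff (d + 1) := by
  rw [coeff_comp_X_add_C p a (show p.natDegree < d + 2 by omega) d,
    Finset.sum_range_succ, Finset.sum_range_succ]
  have h0 : ∑ j ∈ Finset.range d, p.coeff j * (a ^ (j - d) * (j.choose d : ℂ)) = 0 :=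
    Finset.sum_eq_zero fun j hj => by
      rw [Nat.choose_eq_zero_of_lt (Finset.mem_range.mp hj)]; simp
  rw [h0, zero_add, Nat.sub_self, pow_zero, Nat.choose_self,
    show d + 1 - d = 1 by omega, pow_one, Nat.choose_succ_self_right]
  push_cast
  ring

section Family

variable (L : Polynomial ℂ →ₗ[ℂ] ℂ) (P : ℕ → Polynomial ℂ) (h : ℕ → ℂ)

lemma L_C_mul (a : ℂ) (p : Polynomial ℂ) : L (C a * p) = a * L p := by
  rw [← smul_eq_C_mul, map_smul, smul_eq_mul]

variable (hm : ∀ n, (P n).Monic) (hd : ∀ n, (P n).natDegree = n)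

include hm hd in
lemma P_zero_eq_one : P 0 = 1 := ((hm 0).natDegree_eq_zero).mp (hd 0)

include hm hd in
lemma sub_lead_natDegree (q : Polynomial ℂ) (B : ℕ) (hq : q.natDegree ≤ B + 1) :
    (q - C (q.coeff (B + 1)) * P (B + 1)).natDegree ≤ B := by
  rw [natDegree_le_iff_coeff_eq_zero]
  intro j hj
  rw [coeff_sub, coeff_C_mul]
  rcases eq_or_lt_of_le (show B + 1 ≤ j by omega) with hj' | hj'
  · rw [← hj']
    have h1 : (P (B + 1)).coeff (B + 1) = 1 := by
      have := Monic.coeff_natDegree (hm (B + 1))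
      rwa [hd (B + 1)] at this
    rw [h1, mul_one, sub_self]
  · rw [coeff_eq_zero_of_natDegree_lt (show q.natDegree < j from lt_of_le_of_lt hq hj'),
      coeff_eq_zero_of_natDegree_lt
        (show (P (B + 1)).natDegree < j from by rw [hd]; exact hj')]
    simp

include hm hd in
lemma key_eval (ho : ∀ k n, L (P k * P n) = if k = n then h n else 0) :
    ∀ (N : ℕ) (q : Polynomial ℂ) (n : ℕ), q.natDegree ≤ N → N ≤ n →
      L (q * P n) = q.coeff n * h n := by
  intro N
  induction N with
  | zero =>
    intro q n hq hn
    have hq0 : q = C (q.coeff 0) := eq_C_of_natDegree_le_zero hq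
    have hP0 : P 0 = 1 := P_zero_eq_one P hm hd
    conv_lhs => rw [hq0]
    rw [show C (q.coeff 0) * P n = C (q.coeff 0) * (P 0 * P n) by rw [hP0, one_mul],
      L_C_mul, ho 0 n]
    by_cases h0 : (0 : ℕ) = n
    · rw [if_pos h0, ← h0]
    · rw [if_neg h0, mul_zero, coeff_eq_zero_of_natDegree_lt, zero_mul]
      omega
  | succ N IH =>
    intro q n hq hn
    set c := q.coeff (N + 1) with hc
    set r := q - C c * P (N + 1) with hr
    have hdr : r.natDegree ≤ N := sub_lead_natDegree P hm hd q N hq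
    have hqr : q = r + C c * P (N + 1) := by rw [hr]; ring
    conv_lhs => rw [hqr]
    rw [add_mul, map_add, IH r n hdr (by omega), mul_assoc, L_C_mul, ho]
    by_cases hn' : N + 1 = n
    · rw [if_pos hn', ← hn']
      have h2 : r.coeff (N + 1) = 0 := coeff_eq_zero_of_natDegree_lt (by omega)
      have h3 : q.coeff (N + 1) = c := hc.symm
      rw [h2, h3, zero_mul, zero_add]
    · rw [if_neg hn']
      have hlt : N + 1 < n := lt_of_le_of_ne hn hn'
      have h4 : q.coeff n = r.coeff n := by
        rw [hqr, coeff_add, coeff_C_mul,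
          coeff_eq_zero_of_natDegree_lt
            (show (P (N + 1)).natDegree < n from by rw [hd]; exact hlt),
          mul_zero, add_zero]
      rw [h4, mul_zero, add_zero]

include hm hd in
lemma funct_ext (M N : Polynomial ℂ →ₗ[ℂ] ℂ) (hMN : ∀ n, M (P n) = N (P n))
    (p : Polynomial ℂ) : M p = N p := by
  suffices H : ∀ (B : ℕ) (q : Polynomial ℂ), q.natDegree ≤ B → M q = N q from
    H p.natDegree p le_rfl
  intro B
  induction B with
  | zero =>
    intro q hq
    have hP0 : P 0 = 1 := P_zero_eq_one P hm hd
    have : q = q.coeff 0 • P 0 := by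
      rw [hP0, smul_eq_C_mul, mul_one]
      exact eq_C_of_natDegree_le_zero hq
    rw [this, map_smul, map_smul, hMN 0]
  | succ B IH =>
    intro q hq
    set c := q.coeff (B + 1)
    set r := q - C c * P (B + 1) with hr
    have hdr : r.natDegree ≤ B := sub_lead_natDegree P hm hd q B hq
    have hqr : q = r + c • P (B + 1) := by rw [hr, smul_eq_C_mul]; ring
    rw [hqr, map_add, map_add, map_smul, map_smul, hMN (B + 1), IH r hdr]

include hm hd in
lemma sumP_natDegree_le (cf : ℕ → ℂ) (K : ℕ) :
    (∑ k ∈ Finset.range (K + 1), C (cf k) * P k).natDegree ≤ K :=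
  natDegree_sum_le_of_forall_le _ _ fun k hk =>
    (natDegree_C_mul_le _ _).trans (by rw [hd]; exact Nat.lt_succ_iff.mp (Finset.mem_range.mp hk))

include hm hd in
lemma sumP_coeff_top (cf : ℕ → ℂ) (K : ℕ) :
    (∑ k ∈ Finset.range (K + 1), C (cf k) * P k).coeff K = cf K := by
  rw [finset_sum_coeff, Finset.sum_range_succ]
  have h0 : ∑ k ∈ Finset.range K, (C (cf k) * P k).coeff K = 0 :=
    Finset.sum_eq_zero fun k hk => by
      rw [coeff_C_mul, coeff_eq_zero_of_natDegree_lt (by rw [hd]; exact Finset.mem_range.mp hk),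
        mul_zero]
  have h1 : (P K).coeff K = 1 := by
    have := Monic.coeff_natDegree (hm K); rwa [hd K] at this
  rw [h0, coeff_C_mul, h1, mul_one, zero_add]

include hm hd in
lemma sumP_L_mul (ho : ∀ k n, L (P k * P n) = if k = n then h n else 0)
    (cf : ℕ → ℂ) (K n : ℕ) :
    L ((∑ k ∈ Finset.range K, C (cf k) * P k) * P n)
      = if n < K then cf n * h n else 0 := by
  rw [Finset.sum_mul, map_sum]
  have : ∀ k ∈ Finset.range K, L (C (cf k) * P k * P n)
      = if k = n then cf k * h n else 0 := by
    intro k _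
    rw [mul_assoc, L_C_mul, ho k n]
    split_ifs <;> ring
  rw [Finset.sum_congr rfl this, Finset.sum_ite_eq' (Finset.range K) n fun k => cf k * h n]
  simp [Finset.mem_range]

end Family

end CoherentAux

open CoherentAux Finset

/-- If `{L₀, L₁}` is a `Δ`-coherent pair of the second kind, then there exist
polynomials `Λ₂, Λ₃` with `deg Λ₂ = 2`, `deg Λ₃ ≤ 3`, whose leading coefficients
satisfy `λ₂^{(2)} + (n−1)λ₃^{(3)} ≠ 0` for all `n ≥ 1`, such that
`Δ*L₁ = Λ₂L₀` and `L₁ = Λ₃L₀`. -/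
theorem coherent_pair_implies_functional_relations (L₀ L₁ : Polynomial ℂ →ₗ[ℂ] ℂ)
    (P₀ P₁ : ℕ → Polynomial ℂ) (h₀ h₁ : ℕ → ℂ) (τ : ℕ → ℂ)
    (hmonic₀ : ∀ n, (P₀ n).Monic) (hdeg₀ : ∀ n, (P₀ n).natDegree = n)
    (hmonic₁ : ∀ n, (P₁ n).Monic) (hdeg₁ : ∀ n, (P₁ n).natDegree = n)
    (hh₀ : ∀ n, h₀ n ≠ 0) (hh₁ : ∀ n, h₁ n ≠ 0)
    (horth₀ : ∀ k n, L₀ (P₀ k * P₀ n) = if k = n then h₀ n else 0)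
    (horth₁ : ∀ k n, L₁ (P₁ k * P₁ n) = if k = n then h₁ n else 0)
    (hτ : ∀ n : ℕ, 1 ≤ n → τ n ≠ 0)
    (hcoh : ∀ n : ℕ, 1 ≤ n →
      polyDelta (P₀ (n + 1)) = C ((n : ℂ) + 1) * (P₁ n - C (τ n) * P₁ (n - 1))) :
    ∃ Λ₂ Λ₃ : Polynomial ℂ,
      Λ₂.natDegree = 2 ∧ Λ₃.natDegree ≤ 3 ∧
      (∀ n : ℕ, 1 ≤ n → Λ₂.coeff 2 + ((n : ℂ) - 1) * Λ₃.coeff 3 ≠ 0) ∧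
      (∀ p : Polynomial ℂ, L₁ (polyDelta p) = -(L₀ (Λ₂ * p))) ∧
      (∀ p : Polynomial ℂ, L₁ p = L₀ (Λ₃ * p)) := by
  have hP₁0 : P₁ 0 = 1 := P_zero_eq_one P₁ hmonic₁ hdeg₁
  have KE₀ : ∀ (q : Polynomial ℂ) (n : ℕ), q.natDegree ≤ n →
      L₀ (q * P₀ n) = q.coeff n * h₀ n := fun q n hq =>
    key_eval L₀ P₀ h₀ hmonic₀ hdeg₀ horth₀ n q n hq le_rfl
  have KE₁ : ∀ (q : Polynomial ℂ) (n : ℕ), q.natDegree ≤ n →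
      L₁ (q * P₁ n) = q.coeff n * h₁ n := fun q n hq =>
    key_eval L₁ P₁ h₁ hmonic₁ hdeg₁ horth₁ n q n hq le_rfl
  -- moments of L₁ vanish on P₁ k for k ≥ 1
  have hmom : ∀ k : ℕ, 1 ≤ k → L₁ (P₁ k) = 0 := by
    intro k hk
    have := horth₁ k 0
    rw [hP₁0, mul_one] at this
    rw [this, if_neg (by omega)]
  -- L₁ ∘ Δ vanishes on P₀ n for n ≥ 3
  have hdelta_high : ∀ n : ℕ, 3 ≤ n → L₁ (polyDelta (P₀ n)) = 0 := by
    intro n hn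
    obtain ⟨m, rfl⟩ : ∃ m, n = m + 1 := ⟨n - 1, by omega⟩
    rw [hcoh m (by omega), L_C_mul, map_sub, L_C_mul, hmom m (by omega),
      hmom (m - 1) (by omega)]
    ring
  -- the polynomial Λ₂
  set Λ₂ : Polynomial ℂ :=
    ∑ k ∈ Finset.range 3, C (-(L₁ (polyDelta (P₀ k))) / h₀ k) * P₀ k with hΛ₂def
  have hΛ₂deg : Λ₂.natDegree ≤ 2 := sumP_natDegree_le P₀ hmonic₀ hdeg₀ _ 2
  have hΛ₂coeff : Λ₂.coeff 2 = -(L₁ (polyDelta (P₀ 2))) / h₀ 2 :=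
    sumP_coeff_top P₀ hmonic₀ hdeg₀ _ 2
  have hΛ₂mul : ∀ n, L₀ (Λ₂ * P₀ n)
      = if n < 3 then -(L₁ (polyDelta (P₀ n))) / h₀ n * h₀ n else 0 := fun n =>
    sumP_L_mul L₀ P₀ h₀ hmonic₀ hdeg₀ horth₀ _ 3 n
  -- first functional relation
  have rel₂ : ∀ p : Polynomial ℂ, L₁ (polyDelta p) = -(L₀ (Λ₂ * p)) := by
    intro p
    have := funct_ext P₀ hmonic₀ hdeg₀ (L₁ ∘ₗ deltaLM)
      (-(L₀ ∘ₗ LinearMap.mulLeft ℂ Λ₂)) ?_ p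
    · simpa using this
    · intro n
      simp only [LinearMap.comp_apply, deltaLM_apply, LinearMap.neg_apply,
        LinearMap.mulLeft_apply]
      rw [hΛ₂mul n]
      by_cases hn : n < 3
      · rw [if_pos hn, div_mul_cancel₀ _ (hh₀ n), neg_neg]
      · rw [if_neg hn, hdelta_high n (by omega), neg_zero]
  -- moments of L₁ vanish on P₀ n for n ≥ 4
  have hP0high : ∀ n : ℕ, 4 ≤ n → L₁ (P₀ n) = 0 := by
    intro n hn
    have e1 : polyDelta (X * P₀ n)
        = X * polyDelta (P₀ n) + (P₀ n + polyDelta (P₀ n)) := by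
      simp only [polyDelta, mul_comp, X_comp, C_1]; ring
    have e2 : L₁ (P₀ n) = L₁ (polyDelta (X * P₀ n)) - L₁ (X * polyDelta (P₀ n))
        - L₁ (polyDelta (P₀ n)) := by
      rw [e1, map_add, map_add]; ring
    have t1 : L₁ (polyDelta (X * P₀ n)) = 0 := by
      have hdm : (Λ₂ * X).natDegree ≤ 3 := by
        refine natDegree_mul_le.trans ?_
        rw [natDegree_X]
        omega
      rw [rel₂, show Λ₂ * (X * P₀ n) = Λ₂ * X * P₀ n by ring,
        KE₀ (Λ₂ * X) n (hdm.trans (by omega)),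
        coeff_eq_zero_of_natDegree_lt (lt_of_le_of_lt hdm (by omega)), zero_mul, neg_zero]
    have t3 : L₁ (polyDelta (P₀ n)) = 0 := hdelta_high n (by omega)
    have t2 : L₁ (X * polyDelta (P₀ n)) = 0 := by
      obtain ⟨m, rfl⟩ : ∃ m, n = m + 1 := ⟨n - 1, by omega⟩
      rw [hcoh m (by omega)]
      rw [show (X : Polynomial ℂ) * (C ((m : ℂ) + 1) * (P₁ m - C (τ m) * P₁ (m - 1)))
          = C ((m : ℂ) + 1) * (X * P₁ m) - C ((m : ℂ) + 1) * (C (τ m) * (X * P₁ (m - 1)))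
        by ring]
      rw [map_sub, L_C_mul, L_C_mul, L_C_mul,
        KE₁ X m (by rw [natDegree_X]; omega), KE₁ X (m - 1) (by rw [natDegree_X]; omega)]
      have c1 : (X : Polynomial ℂ).coeff m = 0 := by rw [coeff_X, if_neg (by omega)]
      have c2 : (X : Polynomial ℂ).coeff (m - 1) = 0 := by rw [coeff_X, if_neg (by omega)]
      rw [c1, c2]
      ring
    rw [e2, t1, t2, t3]; ring
  -- the polynomial Λ₃
  set Λ₃ : Polynomial ℂ :=
    ∑ k ∈ Finset.range 4, C (L₁ (P₀ k) / h₀ k) * P₀ k with hΛ₃def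
  have hΛ₃deg : Λ₃.natDegree ≤ 3 := sumP_natDegree_le P₀ hmonic₀ hdeg₀ _ 3
  have hΛ₃coeff : Λ₃.coeff 3 = L₁ (P₀ 3) / h₀ 3 := sumP_coeff_top P₀ hmonic₀ hdeg₀ _ 3
  have hΛ₃mul : ∀ n, L₀ (Λ₃ * P₀ n)
      = if n < 4 then L₁ (P₀ n) / h₀ n * h₀ n else 0 := fun n =>
    sumP_L_mul L₀ P₀ h₀ hmonic₀ hdeg₀ horth₀ _ 4 n
  -- second functional relation
  have rel₃ : ∀ p : Polynomial ℂ, L₁ p = L₀ (Λ₃ * p) := by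
    intro p
    refine funct_ext P₀ hmonic₀ hdeg₀ L₁ (L₀ ∘ₗ LinearMap.mulLeft ℂ Λ₃) ?_ p
    intro n
    simp only [LinearMap.comp_apply, LinearMap.mulLeft_apply]
    rw [hΛ₃mul n]
    by_cases hn : n < 4
    · rw [if_pos hn, div_mul_cancel₀ _ (hh₀ n)]
    · rw [if_neg hn, hP0high n (by omega)]
  -- the key identity
  have key : ∀ n : ℕ, 1 ≤ n →
      (Λ₂.coeff 2 + ((n : ℂ) - 1) * Λ₃.coeff 3) * h₀ (n + 1)
        = ((n : ℂ) + 1) * (τ n * h₁ (n - 1)) := by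
    intro n hn
    set p : Polynomial ℂ := P₁ (n - 1) with hp
    set r : Polynomial ℂ := p.comp (X + C (-1)) with hr
    have hσr : r.comp (X + C 1) = p := by
      rw [hr, Polynomial.comp_assoc]
      have hXC : (X + C (-1) : Polynomial ℂ).comp (X + C 1) = X := by
        rw [add_comp, X_comp, C_comp, map_neg]
        ring
      rw [hXC, comp_X]
    have hΔr : polyDelta r = p - r := by rw [polyDelta, hσr]
    have hpdeg : p.natDegree = n - 1 := hdeg₁ _
    have hplead : p.coeff (n - 1) = 1 := by
      have := Monic.coeff_natDegree (hmonic₁ (n - 1))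
      rwa [hdeg₁] at this
    have hrdeg : r.natDegree ≤ n - 1 := by
      rw [natDegree_le_iff_coeff_eq_zero]
      intro k hk
      rw [hr, coeff_comp_high p (-1) (le_of_eq hpdeg) (by omega),
        coeff_eq_zero_of_natDegree_lt (by omega)]
    set q : Polynomial ℂ := Λ₂ * r + Λ₃ * polyDelta r with hq
    -- degree and top coefficient of q
    have hqprop : q.natDegree ≤ n + 1 ∧
        q.coeff (n + 1) = Λ₂.coeff 2 + ((n : ℂ) - 1) * Λ₃.coeff 3 := by
      rcases eq_or_lt_of_le hn with h1 | h2
      · -- n = 1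
        have hn1 : n = 1 := h1.symm
        subst hn1
        have hp1 : p = 1 := by rw [hp, hP₁0]
        have hr1 : r = 1 := by rw [hr, hp1, one_comp]
        have hΔr1 : polyDelta r = 0 := by rw [hΔr, hp1, hr1, sub_self]
        have hq1 : q = Λ₂ := by rw [hq, hΔr1, hr1, mul_zero, mul_one, add_zero]
        constructor
        · rw [hq1]; exact hΛ₂deg.trans (by norm_num)
        · rw [hq1]
          norm_num
      · -- n ≥ 2
        have hn2 : 2 ≤ n := h2
        have hrlead : r.coeff (n - 1) = 1 := by
          rw [hr, coeff_comp_high p (-1) (le_of_eq hpdeg) le_rfl, hplead]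
        have hΔrdeg : (polyDelta r).natDegree ≤ n - 2 := by
          rw [natDegree_le_iff_coeff_eq_zero]
          intro k hk
          rw [hΔr, coeff_sub]
          rcases eq_or_lt_of_le (show n - 1 ≤ k by omega) with hk' | hk'
          · rw [← hk', hplead, hrlead, sub_self]
          · rw [coeff_eq_zero_of_natDegree_lt (by omega),
              coeff_eq_zero_of_natDegree_lt (by omega), sub_self]
        have hΔrlead : (polyDelta r).coeff (n - 2) = (n : ℂ) - 1 := by
          have hstep : n - 2 + 1 = n - 1 := by omega
          have hrc : r.coeff (n - 2)
              = p.coeff (n - 2) + (-1) * (((n : ℕ) - 2 : ℕ) + 1 : ℂ) * p.coeff (n - 2 + 1) := by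
            rw [hr]
            exact_mod_cast coeff_comp_pred p (-1) (by omega)
          rw [hΔr, coeff_sub, hrc, hstep, hplead]
          have : (((n : ℕ) - 2 : ℕ) : ℂ) = (n : ℂ) - 2 := by
            push_cast [Nat.cast_sub hn2]
            ring
          rw [this]
          ring
        constructor
        · rw [hq]
          refine natDegree_add_le_of_degree_le ?_ ?_
          · exact natDegree_mul_le.trans (by omega)
          · exact natDegree_mul_le.trans (by omega)
        · have c1 : (Λ₂ * r).coeff (n + 1) = Λ₂.coeff 2 * r.coeff (n - 1) := by
            have e : 2 + (n - 1) = n + 1 := by omega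
            rw [← e]
            exact coeff_mul_add_eq_of_natDegree_le hΛ₂deg hrdeg
          have c2 : (Λ₃ * polyDelta r).coeff (n + 1)
              = Λ₃.coeff 3 * (polyDelta r).coeff (n - 2) := by
            have e : 3 + (n - 2) = n + 1 := by omega
            rw [← e]
            exact coeff_mul_add_eq_of_natDegree_le hΛ₃deg hΔrdeg
          rw [hq, coeff_add, c1, c2, hrlead, hΔrlead]
          ring
    -- evaluate L₀ (q * P₀ (n+1)) in two ways
    have lhs_eval : L₀ (q * P₀ (n + 1))
        = (Λ₂.coeff 2 + ((n : ℂ) - 1) * Λ₃.coeff 3) * h₀ (n + 1) := by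
      rw [KE₀ q (n + 1) hqprop.1, hqprop.2]
    have rhs_eval : L₀ (q * P₀ (n + 1)) = ((n : ℂ) + 1) * (τ n * h₁ (n - 1)) := by
      have h1 : q * P₀ (n + 1)
          = Λ₂ * (r * P₀ (n + 1)) + Λ₃ * (polyDelta r * P₀ (n + 1)) := by
        rw [hq]; ring
      rw [h1, map_add]
      have h2 : L₀ (Λ₂ * (r * P₀ (n + 1))) = -(L₁ (polyDelta (r * P₀ (n + 1)))) := by
        rw [rel₂ (r * P₀ (n + 1)), neg_neg]
      have h3 : L₀ (Λ₃ * (polyDelta r * P₀ (n + 1)))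
          = L₁ (polyDelta r * P₀ (n + 1)) := (rel₃ _).symm
      rw [h2, h3]
      rw [polyDelta_mul r (P₀ (n + 1))]
      have h5 : polyDelta r * polyDelta (P₀ (n + 1)) + r * polyDelta (P₀ (n + 1))
          = p * polyDelta (P₀ (n + 1)) := by
        rw [hΔr]; ring
      rw [h5, map_add]
      have h6 : L₁ (p * polyDelta (P₀ (n + 1))) = -(((n : ℂ) + 1) * (τ n * h₁ (n - 1))) := by
        rw [hcoh n hn]
        rw [show p * (C ((n : ℂ) + 1) * (P₁ n - C (τ n) * P₁ (n - 1)))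
            = C ((n : ℂ) + 1) * (p * P₁ n) - C ((n : ℂ) + 1) * (C (τ n) * (P₁ (n - 1) * P₁ (n - 1)))
          by rw [hp]; ring]
        rw [map_sub, L_C_mul, L_C_mul, L_C_mul, hp, horth₁ (n - 1) n,
          horth₁ (n - 1) (n - 1), if_neg (by omega), if_pos rfl]
        ring
      rw [h6]
      ring
    rw [← lhs_eval, rhs_eval]
  -- conclusions
  have hlam2ne : Λ₂.coeff 2 ≠ 0 := by
    intro hc
    have hk := key 1 le_rfl
    rw [hc] at hk
    norm_num at hk
    exact hk.elim (hτ 1 le_rfl) (hh₁ 0)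
  have hΛ₂deg' : Λ₂.natDegree = 2 :=
    le_antisymm hΛ₂deg (le_natDegree_of_ne_zero hlam2ne)
  refine ⟨Λ₂, Λ₃, hΛ₂deg', hΛ₃deg, ?_, rel₂, rel₃⟩
  intro n hn hc
  have hk := key n hn
  rw [hc, zero_mul] at hk
  exact (mul_ne_zero (Nat.cast_add_one_ne_zero n)
    (mul_ne_zero (hτ n hn) (hh₁ (n - 1)))) hk.symm
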